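/- Confluence of lazy equivalence with extended reduction: if T₁ reduces to T₂ in one extended parallel step in L₁, and L₁ and L₂ are lazily equivalent at level 0 with respect to T₁, then L₁ and L₂ are lazily equivalent at level 0 with respect to T₂. -/
import Mathlib


inductive Bk | abbr | abst
deriving DecidableEq

inductive Fk | appl | cast
deriving DecidableEq

inductive Tm
| sort : Nat → Tm
| lref : Nat → Tm
| bind : Bk → Tm → Tm → Tm
| flat : Fk → Tm → Tm → Tm
deriving DecidableEq

inductive Lift : Nat → Nat → Tm → Tm → Prop
| sort (l m k) : Lift l m (.sort k) (.sort k)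
| lt {l m i} : i < l → Lift l m (.lref i) (.lref i)
| ge {l m i} : l ≤ i → Lift l m (.lref i) (.lref (i + m))
| bind {l m b W₁ W₂ T₁ T₂} : Lift l m W₁ W₂ → Lift (l + 1) m T₁ T₂ →
    Lift l m (.bind b W₁ T₁) (.bind b W₂ T₂)
| flat {l m f V₁ V₂ T₁ T₂} : Lift l m V₁ V₂ → Lift l m T₁ T₂ →
    Lift l m (.flat f V₁ T₁) (.flat f V₂ T₂)

inductive Env
| null : Env
| pair : Env → Bk → Tm → Env
deriving DecidableEq

inductive Drop : Nat → Nat → Env → Env → Prop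
| atom (l) : Drop l 0 .null .null
| pair {L₁ L₂ b W} : Drop 0 0 L₁ L₂ → Drop 0 0 (.pair L₁ b W) (.pair L₂ b W)
| drop {m L₁ L₂ b W} : Drop 0 m L₁ L₂ → Drop 0 (m + 1) (.pair L₁ b W) L₂
| skip {l m L₁ L₂ b W₁ W₂} : Drop l m L₁ L₂ → Lift l m W₂ W₁ →
    Drop (l + 1) m (.pair L₁ b W₁) (.pair L₂ b W₂)

inductive Cpx (h g : Nat → Nat) : Env → Tm → Tm → Prop
| sort {L k} : Cpx h g L (.sort k) (.sort k)
| lref {L i} : Cpx h g L (.lref i) (.lref i)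
| st {L k d} : g k = d + 1 → Cpx h g L (.sort k) (.sort (h k))
| bind {L b W₁ W₂ T₁ T₂} : Cpx h g L W₁ W₂ → Cpx h g (.pair L b W₁) T₁ T₂ →
    Cpx h g L (.bind b W₁ T₁) (.bind b W₂ T₂)
| flat {L f V₁ V₂ T₁ T₂} : Cpx h g L V₁ V₂ → Cpx h g L T₁ T₂ →
    Cpx h g L (.flat f V₁ T₁) (.flat f V₂ T₂)
| delta {L K b W₁ W₂ V₂ i} : Drop 0 i L (.pair K b W₁) → Cpx h g K W₁ W₂ →
    Lift 0 (i + 1) W₂ V₂ → Cpx h g L (.lref i) V₂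
| beta {L V₁ V₂ W₁ W₂ T₁ T₂} : Cpx h g L V₁ V₂ → Cpx h g L W₁ W₂ →
    Cpx h g (.pair L .abst W₁) T₁ T₂ →
    Cpx h g L (.flat .appl V₁ (.bind .abst W₁ T₁))
      (.bind .abbr (.flat .cast W₂ V₂) T₂)
| zeta {L V U₁ U₂ T₂} : Cpx h g (.pair L .abbr V) U₁ U₂ → Lift 0 1 T₂ U₂ →
    Cpx h g L (.bind .abbr V U₁) T₂
| eps {L U T₁ T₂} : Cpx h g L T₁ T₂ → Cpx h g L (.flat .cast U T₁) T₂
| ee {L U₁ U₂ T} : Cpx h g L U₁ U₂ → Cpx h g L (.flat .cast U₁ T) U₂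
| theta {L V₁ V₂ W₂ U₁ U₂ T₁ T₂} : Cpx h g L V₁ V₂ → Lift 0 1 V₂ W₂ →
    Cpx h g L U₁ U₂ → Cpx h g (.pair L .abbr U₁) T₁ T₂ →
    Cpx h g L (.flat .appl V₁ (.bind .abbr U₁ T₁))
      (.bind .abbr U₂ (.flat .appl W₂ T₂))

inductive Lpx (h g : Nat → Nat) : Env → Env → Prop
| atom : Lpx h g .null .null
| pair {L₁ L₂ b W₁ W₂} : Lpx h g L₁ L₂ → Cpx h g L₁ W₁ W₂ →
    Lpx h g (.pair L₁ b W₁) (.pair L₂ b W₂)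

def elen : Env → Nat
| .null => 0
| .pair L _ _ => elen L + 1

inductive Lleq : Nat → Tm → Env → Env → Prop
| sort {l k L₁ L₂} : elen L₁ = elen L₂ → Lleq l (.sort k) L₁ L₂
| skip {l i L₁ L₂} : elen L₁ = elen L₂ → i < l → Lleq l (.lref i) L₁ L₂
| free {l i L₁ L₂} : elen L₁ = elen L₂ → elen L₁ ≤ i → elen L₂ ≤ i →
    Lleq l (.lref i) L₁ L₂
| lref {l i L₁ L₂ K₁ K₂ b W} : l ≤ i →
    Drop 0 i L₁ (.pair K₁ b W) → Drop 0 i L₂ (.pair K₂ b W) →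
    Lleq 0 W K₁ K₂ → Lleq l (.lref i) L₁ L₂
| bind {l b W T L₁ L₂} : Lleq l W L₁ L₂ →
    Lleq (l + 1) T (.pair L₁ b W) (.pair L₂ b W) →
    Lleq l (.bind b W T) L₁ L₂
| flat {l f V T L₁ L₂} : Lleq l V L₁ L₂ → Lleq l T L₁ L₂ →
    Lleq l (.flat f V T) L₁ L₂

/-! Auxiliary development -/

def tsize : Tm → Nat
| .sort _ => 1
| .lref _ => 1
| .bind _ W T => tsize W + tsize T + 2
| .flat _ V T => tsize V + tsize T + 1

def esize : Env → Nat
| .null => 0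
| .pair L _ W => esize L + tsize W + 1

lemma tsize_pos (T : Tm) : 1 ≤ tsize T := by
  cases T <;> simp [tsize] <;> omega

lemma tsizeLift {l m T₁ T₂} (h : Lift l m T₁ T₂) : tsize T₁ = tsize T₂ := by
  induction h <;> simp [tsize] <;> omega

lemma dropRefl : ∀ L, Drop 0 0 L L
| .null => .atom 0
| .pair L b W => .pair (dropRefl L)

lemma drop_zero_eq : ∀ {L X : Env}, Drop 0 0 L X → X = L := by
  intro L
  induction L with
  | null => intro X h; cases h; rfl
  | pair L b W ih => intro X h; cases h with
    | pair h' => rw [ih h']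

lemma drop_pair_succ {n L b W X} (h : Drop 0 (n+1) (.pair L b W) X) :
    Drop 0 n L X := by
  cases h with
  | drop h => exact h

lemma dropLen : ∀ {l m L K}, Drop l m L K → elen L = elen K + m := by
  intro l m L K h
  induction h <;> simp [elen] at * <;> omega

lemma dropDet : ∀ {m} {L X Y : Env}, Drop 0 m L X → Drop 0 m L Y → X = Y := by
  intro m
  induction m with
  | zero => intro L X Y h1 h2; rw [drop_zero_eq h1, drop_zero_eq h2]
  | succ n ih =>
    intro L X Y h1 h2
    cases h1 with
    | drop h1' => exact ih h1' (drop_pair_succ h2)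

lemma dropCompose : ∀ {a b} {L K X : Env}, Drop 0 a L K → Drop 0 b K X →
    Drop 0 (a + b) L X := by
  intro a
  induction a with
  | zero =>
    intro b L K X h1 h2
    rw [drop_zero_eq h1] at h2; simpa using h2
  | succ n ih =>
    intro b L K X h1 h2
    cases h1 with
    | drop h1' =>
      have h3 := ih h1' h2
      have e : n + 1 + b = (n + b) + 1 := by omega
      rw [e]; exact .drop h3

lemma dropSucc {i L K b W} (h : Drop 0 i L (.pair K b W)) : Drop 0 (i+1) L K :=
  dropCompose h (.drop (dropRefl K))

lemma dropDiv : ∀ {a b} {L K X : Env}, Drop 0 a L K → Drop 0 (a + b) L X →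
    Drop 0 b K X := by
  intro a
  induction a with
  | zero =>
    intro b L K X h1 h2
    rw [drop_zero_eq h1]; simpa using h2
  | succ n ih =>
    intro b L K X h1 h2
    cases h1 with
    | drop h1' =>
      have e : n + 1 + b = (n + b) + 1 := by omega
      rw [e] at h2
      exact ih h1' (drop_pair_succ h2)

lemma esizeDropLe : ∀ {l m} {L K : Env}, Drop l m L K → esize K ≤ esize L := by
  intro l m L K h
  induction h with
  | atom => exact le_rfl
  | pair _ ih => simp [esize]; omega
  | drop _ ih => simp [esize]; omega
  | skip _ hl ih => simp [esize, tsizeLift hl] at *; omega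

/-- hereditarily free positions at level `l` -/
inductive Hf : Nat → Env → Tm → Nat → Prop
| lref {l L i} : l ≤ i → Hf l L (.lref i) i
| delta {l L i K b W j} : l ≤ i → Drop 0 i L (.pair K b W) → Hf 0 K W j →
    Hf l L (.lref i) (i + 1 + j)
| bindW {l L b W T j} : Hf l L W j → Hf l L (.bind b W T) j
| bindT {l L b W T j} : Hf (l+1) (.pair L b W) T (j+1) → Hf l L (.bind b W T) j
| flatV {l L f V T j} : Hf l L V j → Hf l L (.flat f V T) j
| flatT {l L f V T j} : Hf l L T j → Hf l L (.flat f V T) j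

lemma hfLe {l L T j} (h : Hf l L T j) : l ≤ j := by
  induction h <;> omega

lemma hfMono {l' l L T j} (h : Hf l L T j) (hl : l' ≤ l) : Hf l' L T j := by
  induction h generalizing l' with
  | lref h => exact .lref (le_trans hl h)
  | delta h hd hf => exact .delta (le_trans hl h) hd hf
  | bindW _ ih => exact .bindW (ih hl)
  | bindT _ ih => exact .bindT (ih (by omega))
  | flatV _ ih => exact .flatV (ih hl)
  | flatT _ ih => exact .flatT (ih hl)

lemma dropTransGe : ∀ {l m} {L K : Env}, Drop l m L K → ∀ {i X}, l ≤ i →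
    Drop 0 (m + i) L X → Drop 0 i K X := by
  intro l m L K h
  induction h with
  | atom => intro i X _ h2; simpa using h2
  | pair h1 ih =>
    intro i X _ h2
    rw [drop_zero_eq h1] at *
    simpa using h2
  | @drop m' L₁' L₂' b' W' h1 ih =>
    intro i X hle h2
    have e : m' + 1 + i = (m' + i) + 1 := by omega
    rw [e] at h2
    exact ih hle (drop_pair_succ h2)
  | skip h1 hl ih =>
    intro i X hle h2
    obtain ⟨i', rfl⟩ : ∃ i', i = i' + 1 := ⟨i - 1, by omega⟩
    have e : ∀ m : Nat, m + (i' + 1) = (m + i') + 1 := by omega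
    rw [e] at h2
    exact .drop (ih (by omega) (drop_pair_succ h2))

lemma dropTransGe' : ∀ {l m} {L K : Env}, Drop l m L K → ∀ {i X}, l ≤ i →
    Drop 0 i K X → Drop 0 (m + i) L X := by
  intro l m L K h
  induction h with
  | atom => intro i X _ h2; simpa using h2
  | pair h1 ih =>
    intro i X _ h2
    rw [drop_zero_eq h1] at *
    simpa using h2
  | drop h1 ih =>
    intro i X hle h2
    have h3 := ih hle h2
    have e : ∀ m : Nat, m + 1 + i = (m + i) + 1 := by omega
    rw [e]
    exact .drop h3
  | skip h1 hl ih =>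
    intro i X hle h2
    obtain ⟨i', rfl⟩ : ∃ i', i = i' + 1 := ⟨i - 1, by omega⟩
    have h3 := ih (by omega) (drop_pair_succ h2)
    have e : ∀ m : Nat, m + (i' + 1) = (m + i') + 1 := by omega
    rw [e]
    exact .drop h3

lemma hfD : ∀ {l L V j}, Hf l L V j → ∀ {m K W}, Drop l m L K → Lift l m W V →
    l + m ≤ j ∧ Hf l K W (j - m) := by
  intro l L V j hf
  induction hf with
  | @lref l L i hli =>
    intro m K W hd hl
    cases hl with
    | lt h => omega
    | @ge _ _ i₀ h =>
      refine ⟨by omega, ?_⟩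
      have e : i₀ + m - m = i₀ := by omega
      rw [e]
      exact .lref h
  | @delta l L i Q c U j₀ hli hdr hf0 ih =>
    intro m K W hd hl
    cases hl with
    | lt h => omega
    | @ge _ _ i₀ h =>
      have hdr' : Drop 0 (m + i₀) L (.pair Q c U) := by
        have e : m + i₀ = i₀ + m := by omega
        rw [e]; exact hdr
      have h2 := dropTransGe hd h hdr'
      refine ⟨by omega, ?_⟩
      have e : i₀ + m + 1 + j₀ - m = i₀ + 1 + j₀ := by omega
      rw [e]
      exact .delta h h2 hf0
  | bindW hfW ih =>
    intro m K W hd hl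
    cases hl with
    | bind hlW hlT =>
      obtain ⟨h1, h2⟩ := ih hd hlW
      exact ⟨h1, .bindW h2⟩
  | @bindT l L b VW VT j hfT ih =>
    intro m K W hd hl
    cases hl with
    | bind hlW hlT =>
      obtain ⟨h1, h2⟩ := ih (.skip hd hlW) hlT
      refine ⟨by omega, .bindT ?_⟩
      have e : j + 1 - m = (j - m) + 1 := by omega
      rw [e] at h2
      exact h2
  | flatV hfV ih =>
    intro m K W hd hl
    cases hl with
    | flat hlV hlT =>
      obtain ⟨h1, h2⟩ := ih hd hlV
      exact ⟨h1, .flatV h2⟩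
  | flatT hfT ih =>
    intro m K W hd hl
    cases hl with
    | flat hlV hlT =>
      obtain ⟨h1, h2⟩ := ih hd hlT
      exact ⟨h1, .flatT h2⟩

lemma hfD' : ∀ {l K W j}, Hf l K W j → ∀ {m L V}, Drop l m L K → Lift l m W V →
    Hf l L V (j + m) := by
  intro l K W j hf
  induction hf with
  | @lref l K i hli =>
    intro m L V hd hl
    cases hl with
    | lt h => omega
    | ge h => exact .lref (by omega)
  | @delta l K i Q c U j₀ hli hdr hf0 ih =>
    intro m L V hd hl
    cases hl with
    | lt h => omega
    | ge h =>
      have h2 := dropTransGe' hd hli hdr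
      have h3 : Drop 0 (i + m) L (.pair Q c U) := by
        have e : i + m = m + i := by omega
        rw [e]; exact h2
      have h4 : Hf l L (.lref (i + m)) ((i + m) + 1 + j₀) :=
        .delta (by omega) h3 hf0
      have e : i + 1 + j₀ + m = (i + m) + 1 + j₀ := by omega
      rw [e]
      exact h4
  | bindW hfW ih =>
    intro m L V hd hl
    cases hl with
    | bind hlW hlT => exact .bindW (ih hd hlW)
  | @bindT l K b WW WT j hfT ih =>
    intro m L V hd hl
    cases hl with
    | bind hlW hlT =>
      have h2 := ih (.skip hd hlW) hlT
      have e : j + 1 + m = (j + m) + 1 := by omega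
      rw [e] at h2
      exact .bindT h2
  | flatV hfV ih =>
    intro m L V hd hl
    cases hl with
    | flat hlV hlT => exact .flatV (ih hd hlV)
  | flatT hfT ih =>
    intro m L V hd hl
    cases hl with
    | flat hlV hlT => exact .flatT (ih hd hlT)

lemma hfSplit {l M T j} (hf : Hf l M T j) (hlt : l < j) :
    Hf (l+1) M T j ∨ ∃ K c U, Drop 0 l M (.pair K c U) ∧ Hf 0 K U (j - l - 1) := by
  induction hf with
  | lref h => exact .inl (.lref (by omega))
  | @delta l L i K b W j₀ h hd hf0 =>
    by_cases hli : l = i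
    · subst hli
      exact .inr ⟨K, b, W, hd, by
        have e : l + 1 + j₀ - l - 1 = j₀ := by omega
        rw [e]; exact hf0⟩
    · exact .inl (.delta (by omega) hd hf0)
  | bindW _ ih =>
    rcases ih hlt with h | ⟨K, c, U, hd, hf0⟩
    · exact .inl (.bindW h)
    · exact .inr ⟨K, c, U, hd, hf0⟩
  | @bindT l L b W T j _ ih =>
    rcases ih (by omega) with h | ⟨K, c, U, hd, hf0⟩
    · exact .inl (.bindT h)
    · refine .inr ⟨K, c, U, drop_pair_succ hd, ?_⟩
      have e : j + 1 - (l + 1) - 1 = j - l - 1 := by omega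
      rw [e] at hf0; exact hf0
  | flatV _ ih =>
    rcases ih hlt with h | hh
    · exact .inl (.flatV h)
    · exact .inr hh
  | flatT _ ih =>
    rcases ih hlt with h | hh
    · exact .inl (.flatT h)
    · exact .inr hh

inductive EnvRel : (Nat → Prop) → Env → Env → Prop
| refl (P L) : EnvRel P L L
| cons {P L₁ L₂ b₁ b₂ W₁ W₂} : EnvRel P L₁ L₂ →
    (∀ j, Hf 0 L₂ W₂ j → Hf 0 L₁ W₁ j ∨ P j) →
    EnvRel (fun j => ∃ j₀, j = j₀ + 1 ∧ P j₀) (.pair L₁ b₁ W₁) (.pair L₂ b₂ W₂)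

lemma envRelDrop : ∀ {P L₁ L₂}, EnvRel P L₁ L₂ → ∀ {i K₂ c U₂},
    Drop 0 i L₂ (.pair K₂ c U₂) →
    ∃ K₁ c₁ U₁, Drop 0 i L₁ (.pair K₁ c₁ U₁) ∧
      ∀ j₀, Hf 0 K₂ U₂ j₀ → Hf 0 K₁ U₁ j₀ ∨ P (i + 1 + j₀) := by
  intro P L₁ L₂ rel
  induction rel with
  | refl P L => intro i K₂ c U₂ hd; exact ⟨K₂, c, U₂, hd, fun _ h => .inl h⟩
  | @cons P L₁ L₂ b₁ b₂ W₁ W₂ rel hent ih =>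
    intro i K₂ c U₂ hd
    cases i with
    | zero =>
      have he := drop_zero_eq hd
      injection he with e1 e2 e3
      subst e1; subst e2; subst e3
      exact ⟨L₁, b₁, W₁, dropRefl _, fun j₀ h =>
        (hent j₀ h).imp id (fun p => ⟨j₀, by omega, p⟩)⟩
    | succ i' =>
      obtain ⟨K₁, c₁, U₁, d, m⟩ := ih (drop_pair_succ hd)
      exact ⟨K₁, c₁, U₁, .drop d, fun j₀ h =>
        (m j₀ h).imp id (fun p => ⟨i' + 1 + j₀, by omega, p⟩)⟩

lemma hfEnvRel : ∀ (T : Tm) {l L₁ L₂ P j}, EnvRel P L₁ L₂ → Hf l L₂ T j →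
    Hf l L₁ T j ∨ P j := by
  intro T
  induction T with
  | sort k => intro l L₁ L₂ P j rel hf; cases hf
  | lref i =>
    intro l L₁ L₂ P j rel hf
    cases hf with
    | lref h => exact .inl (.lref h)
    | delta h hd hf0 =>
      obtain ⟨K₁, c₁, U₁, d, m⟩ := envRelDrop rel hd
      exact (m _ hf0).imp (fun hh => .delta h d hh) id
  | bind b W T ihW ihT =>
    intro l L₁ L₂ P j rel hf
    cases hf with
    | bindW hw => exact (ihW rel hw).imp .bindW id
    | bindT ht =>
      have rel' : EnvRel _ (.pair L₁ b W) (.pair L₂ b W) :=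
        .cons rel (fun j h => ihW rel h)
      rcases ihT rel' ht with h | ⟨z, hz, p⟩
      · exact .inl (.bindT h)
      · have : z = j := by omega
        subst this
        exact .inr p
  | flat f V T ihV ihT =>
    intro l L₁ L₂ P j rel hf
    cases hf with
    | flatV hv => exact (ihV rel hv).imp .flatV id
    | flatT ht => exact (ihT rel ht).imp .flatT id

lemma cpx_hf {h g : Nat → Nat} : ∀ {L T₁ T₂}, Cpx h g L T₁ T₂ →
    ∀ j, Hf 0 L T₂ j → Hf 0 L T₁ j := by
  intro L T₁ T₂ hc
  induction hc with
  | sort => exact fun j hf => hf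
  | lref => exact fun j hf => hf
  | st _ => intro j hf; cases hf
  | @bind L b W₁ W₂ T₁ T₂ hW hT ihW ihT =>
    intro j hf
    cases hf with
    | bindW hw => exact .bindW (ihW _ hw)
    | bindT ht =>
      have rel : EnvRel (fun j => ∃ j₀, j = j₀ + 1 ∧ False)
          (.pair L b W₁) (.pair L b W₂) :=
        .cons (.refl (fun _ => False) L) (fun j hf => .inl (ihW j hf))
      rcases hfEnvRel _ rel ht with h1 | ⟨_, _, hF⟩
      swap
      · exact hF.elim
      have h0 : Hf 0 (.pair L b W₁) T₂ (j + 1) := hfMono h1 (by omega)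
      have h2 := ihT _ h0
      rcases hfSplit h2 (by omega) with h3 | ⟨K, c, U, hd, hf0⟩
      · exact .bindT h3
      · have he := drop_zero_eq hd
        injection he with e1 e2 e3
        subst e1; subst e2; subst e3
        have e : j + 1 - 0 - 1 = j := by omega
        rw [e] at hf0
        exact .bindW hf0
  | flat _ _ ihV ihT =>
    intro j hf
    cases hf with
    | flatV hv => exact .flatV (ihV _ hv)
    | flatT ht => exact .flatT (ihT _ ht)
  | @delta L K b W₁ W₂ V₂ i hdr hW hl ihW =>
    intro j hf
    have hd1 : Drop 0 (i + 1) L K := dropSucc hdr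
    obtain ⟨hle, hfw⟩ := hfD hf hd1 hl
    have h2 := ihW _ hfw
    have h3 : Hf 0 L (.lref i) (i + 1 + (j - (i + 1))) :=
      .delta (Nat.zero_le i) hdr h2
    have e : i + 1 + (j - (i + 1)) = j := by omega
    rw [e] at h3
    exact h3
  | @beta L V₁ V₂ W₁ W₂ T₁ T₂ hV hW hT ihV ihW ihT =>
    intro j hf
    cases hf with
    | bindW hw =>
      cases hw with
      | flatV hh => exact .flatT (.bindW (ihW _ hh))
      | flatT hh => exact .flatV (ihV _ hh)
    | bindT ht =>
      have rel : EnvRel (fun j => ∃ j₀, j = j₀ + 1 ∧ Hf 0 L V₁ j₀)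
          (.pair L .abst W₁) (.pair L .abbr (.flat .cast W₂ V₂)) :=
        .cons (.refl (fun z => Hf 0 L V₁ z) L)
          (fun z hz => by
            cases hz with
            | flatV hh => exact .inl (ihW _ hh)
            | flatT hh => exact .inr (ihV _ hh))
      rcases hfEnvRel _ rel ht with h1 | ⟨z, hz, p⟩
      · have h0 : Hf 0 (.pair L .abst W₁) T₂ (j + 1) := hfMono h1 (by omega)
        have h2 := ihT _ h0
        rcases hfSplit h2 (by omega) with h3 | ⟨K, c, U, hd, hf0⟩
        · exact .flatT (.bindT h3)
        · have he := drop_zero_eq hd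
          injection he with e1 e2 e3
          subst e1; subst e2; subst e3
          have e : j + 1 - 0 - 1 = j := by omega
          rw [e] at hf0
          exact .flatT (.bindW hf0)
      · have : z = j := by omega
        subst this
        exact .flatV p
  | @zeta L V U₁ U₂ T₂ hU hl ihU =>
    intro j hf
    have hd : Drop 0 1 (.pair L .abbr V) L := .drop (dropRefl L)
    have h1 : Hf 0 (.pair L .abbr V) U₂ (j + 1) := hfD' hf hd hl
    have h2 := ihU _ h1
    rcases hfSplit h2 (by omega) with h3 | ⟨K, c, U, hd0, hf0⟩
    · exact .bindT h3
    · have he := drop_zero_eq hd0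
      injection he with e1 e2 e3
      subst e1; subst e2; subst e3
      have e : j + 1 - 0 - 1 = j := by omega
      rw [e] at hf0
      exact .bindW hf0
  | eps _ ih => exact fun j hf => .flatT (ih _ hf)
  | ee _ ih => exact fun j hf => .flatV (ih _ hf)
  | @theta L V₁ V₂ W₂ U₁ U₂ T₁ T₂ hV hlift hU hT ihV ihU ihT =>
    intro j hf
    cases hf with
    | bindW hu => exact .flatT (.bindW (ihU _ hu))
    | bindT ht =>
      have rel : EnvRel (fun j => ∃ j₀, j = j₀ + 1 ∧ False)
          (.pair L .abbr U₁) (.pair L .abbr U₂) :=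
        .cons (.refl (fun _ => False) L) (fun z hz => .inl (ihU _ hz))
      rcases hfEnvRel _ rel ht with h1 | ⟨_, _, hF⟩
      swap
      · exact hF.elim
      have h0 : Hf 0 (.pair L .abbr U₁) (.flat .appl W₂ T₂) (j + 1) :=
        hfMono h1 (by omega)
      cases h0 with
      | flatV hw =>
        have hd : Drop 0 1 (.pair L .abbr U₁) L := .drop (dropRefl L)
        obtain ⟨_, h2⟩ := hfD hw hd hlift
        have e : j + 1 - 1 = j := by omega
        rw [e] at h2
        exact .flatV (ihV _ h2)
      | flatT htt =>
        have h2 := ihT _ htt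
        rcases hfSplit h2 (by omega) with h3 | ⟨K, c, U, hd, hf0⟩
        · exact .flatT (.bindT h3)
        · have he := drop_zero_eq hd
          injection he with e1 e2 e3
          subst e1; subst e2; subst e3
          have e : j + 1 - 0 - 1 = j := by omega
          rw [e] at hf0
          exact .flatT (.bindW hf0)

def sameE (L₁ L₂ : Env) (j : Nat) : Prop :=
  ∃ K₁ K₂ b W, Drop 0 j L₁ (.pair K₁ b W) ∧ Drop 0 j L₂ (.pair K₂ b W)

lemma lleq_len : ∀ {l T L₁ L₂}, Lleq l T L₁ L₂ → elen L₁ = elen L₂ := by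
  intro l T L₁ L₂ h
  induction h with
  | sort h => exact h
  | skip h _ => exact h
  | free h _ _ => exact h
  | lref _ h₁ h₂ _ ih =>
    have e1 := dropLen h₁
    have e2 := dropLen h₂
    simp [elen] at e1 e2
    omega
  | bind _ _ ihW _ => exact ihW
  | flat _ _ ihV _ => exact ihV

lemma lleq_hf : ∀ {l T L₁ L₂}, Lleq l T L₁ L₂ →
    ∀ j, Hf l L₁ T j → j < elen L₁ → sameE L₁ L₂ j := by
  intro l T L₁ L₂ hq
  induction hq with
  | sort _ => intro j hf; cases hf
  | skip _ hlt =>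
    intro j hf
    cases hf with
    | lref h => omega
    | delta h _ _ => omega
  | free _ h₁ h₂ =>
    intro j hf hj
    cases hf with
    | lref h => omega
    | delta h hd _ =>
      have := dropLen hd
      simp [elen] at this
      omega
  | @lref l i L₁ L₂ K₁ K₂ b W hli h₁ h₂ hW ih =>
    intro j hf hj
    cases hf with
    | lref _ => exact ⟨K₁, K₂, b, W, h₁, h₂⟩
    | @delta _ _ _ K c U j₀ _ hdr hf0 =>
      have he := dropDet hdr h₁
      injection he with e1 e2 e3
      subst e1; subst e2; subst e3
      have hlen1 := dropLen h₁
      simp [elen] at hlen1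
      obtain ⟨Q₁, Q₂, c, U, e₁, e₂⟩ := ih _ hf0 (by omega)
      exact ⟨Q₁, Q₂, c, U, dropCompose (dropSucc h₁) e₁,
        dropCompose (dropSucc h₂) e₂⟩
  | @bind l b W T L₁ L₂ _ _ ihW ihT =>
    intro j hf hj
    cases hf with
    | bindW hw => exact ihW _ hw hj
    | bindT ht =>
      obtain ⟨Q₁, Q₂, c, U, e₁, e₂⟩ := ihT _ ht (by simp [elen]; omega)
      exact ⟨Q₁, Q₂, c, U, drop_pair_succ e₁, drop_pair_succ e₂⟩
  | flat _ _ ihV ihT =>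
    intro j hf hj
    cases hf with
    | flatV hv => exact ihV _ hv hj
    | flatT ht => exact ihT _ ht hj

lemma hf_lleq_aux : ∀ n (T : Tm) (L₁ L₂ : Env) (l : Nat),
    esize L₁ + tsize T ≤ n → elen L₁ = elen L₂ →
    (∀ j, Hf l L₁ T j → j < elen L₁ → sameE L₁ L₂ j) → Lleq l T L₁ L₂ := by
  intro n
  induction n with
  | zero =>
    intro T L₁ L₂ l hn
    have := tsize_pos T
    omega
  | succ n ih =>
    intro T L₁ L₂ l hn hlen hc
    match T with
    | .sort k => exact .sort hlen
    | .lref i =>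
      by_cases hl : i < l
      · exact .skip hlen hl
      by_cases he : elen L₁ ≤ i
      · exact .free hlen he (hlen ▸ he)
      obtain ⟨K₁, K₂, b, W, d₁, d₂⟩ := hc i (.lref (by omega)) (by omega)
      have hlen1 := dropLen d₁
      have hlen2 := dropLen d₂
      simp [elen] at hlen1 hlen2
      have hes : esize (Env.pair K₁ b W) ≤ esize L₁ := esizeDropLe d₁
      simp [esize] at hes
      refine .lref (by omega) d₁ d₂ (ih W K₁ K₂ 0 (by simp [tsize] at hn; omega)
        (by omega) ?_)
      intro j₀ hf hb
      obtain ⟨Q₁, Q₂, c, U, e₁, e₂⟩ := hc (i + 1 + j₀)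
        (.delta (by omega) d₁ hf) (by omega)
      exact ⟨Q₁, Q₂, c, U, dropDiv (dropSucc d₁) e₁, dropDiv (dropSucc d₂) e₂⟩
    | .bind b W T' =>
      refine .bind (ih W L₁ L₂ l (by simp [tsize] at hn ⊢; omega) hlen
          (fun j hf hj => hc j (.bindW hf) hj))
        (ih T' (.pair L₁ b W) (.pair L₂ b W) (l + 1)
          (by simp [tsize, esize] at hn ⊢; omega) (by simp [elen, hlen]) ?_)
      intro j hf hj
      have hge := hfLe hf
      obtain ⟨j', rfl⟩ : ∃ j', j = j' + 1 := ⟨j - 1, by omega⟩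
      simp [elen] at hj
      obtain ⟨Q₁, Q₂, c, U, e₁, e₂⟩ := hc j' (.bindT hf) (by omega)
      exact ⟨Q₁, Q₂, c, U, .drop e₁, .drop e₂⟩
    | .flat f V T' =>
      exact .flat
        (ih V L₁ L₂ l (by simp [tsize] at hn ⊢; omega) hlen
          (fun j hf hj => hc j (.flatV hf) hj))
        (ih T' L₁ L₂ l (by simp [tsize] at hn ⊢; omega) hlen
          (fun j hf hj => hc j (.flatT hf) hj))

theorem cpx_lleq_conf_sn {h g : Nat → Nat} {L₁ L₂ : Env} {T₁ T₂ : Tm}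
    (hc : Cpx h g L₁ T₁ T₂) (hq : Lleq 0 T₁ L₁ L₂) : Lleq 0 T₂ L₁ L₂ := by
  exact hf_lleq_aux (esize L₁ + tsize T₂) T₂ L₁ L₂ 0 le_rfl (lleq_len hq)
    (fun j hf hj => lleq_hf hq j (cpx_hf hc j hf) hj)
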